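/- arXiv:2311.18157 — 8 statements merged into one kernel-verified Lean document; each statement's English description precedes it below -/
import Mathlib

section
/- For the query Q_matrix(A,C) :- R_1(A,B), R_2(B,C) with R_2 = B × C a full Cartesian product and R_1 having no dangling tuples, the minimum size of a sub-database (R_1', R_2') with Q_matrix(R_1',R_2') = Q_matrix(R_1,R_2) and R_2' integral (i.e., R_2' = (π_B R_2') × C) equals |A| + |C| · x*, where x* is the minimum size of a subset B' ⊆ B such that every a ∈ A has some b ∈ B' with (a,b) ∈ R_1. -/
open Set

/-- `Q_matrix` semantics: `Q_matrix(X, Y) = {(a,c) : ∃ b, (a,b) ∈ X ∧ (b,c) ∈ Y}`. -/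
def qmat {α β γ : Type} (X : Set (α × β)) (Y : Set (β × γ)) : Set (α × γ) :=
  {p | ∃ b, (p.1, b) ∈ X ∧ (b, p.2) ∈ Y}

/-- The covering number `x*`: the minimum size of `B' ⊆ B` such that every
`a ∈ A` has some `b ∈ B'` with `(a,b) ∈ R₁`. -/
noncomputable def coverNum {α β : Type} (R1 : Set (α × β)) : ℕ :=
  sInf {n | ∃ B' : Set β, (∀ a : α, ∃ b ∈ B', (a, b) ∈ R1) ∧ n = B'.ncard}

lemma my_ncard_prod {β γ : Type} (s : Set β) (t : Set γ) :
    (s ×ˢ t).ncard = s.ncard * t.ncard := by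
  rw [← Nat.card_coe_set_eq, ← Nat.card_coe_set_eq, ← Nat.card_coe_set_eq,
    Nat.card_congr (Equiv.Set.prod s t), Nat.card_prod]

/-- For `Q_matrix(A,C) :- R₁(A,B), R₂(B,C)` with `R₂ = B × C` a
full Cartesian product and `R₁` having no dangling tuples, the minimum size of
a sub-database `(R₁', R₂')` with `Q_matrix(R₁',R₂') = Q_matrix(R₁,R₂)` and
`R₂'` integral (i.e. `R₂' = (π_B R₂') × C`) equals `|A| + |C| · x*`, where
`x*` is the minimum size of a covering subset `B' ⊆ B`. -/
theorem integral_witness_minimum_size {α β γ : Type}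
    [Fintype α] [Fintype β] [Fintype γ] [Nonempty γ]
    (R1 : Set (α × β))
    (hA : ∀ a : α, ∃ b, (a, b) ∈ R1) (hB : ∀ b : β, ∃ a, (a, b) ∈ R1) :
    IsLeast {n | ∃ (S1 : Set (α × β)) (B' : Set β),
        S1 ⊆ R1 ∧
        qmat S1 (B' ×ˢ (Set.univ : Set γ)) =
          qmat R1 ((Set.univ : Set β) ×ˢ (Set.univ : Set γ)) ∧
        n = S1.ncard + (B' ×ˢ (Set.univ : Set γ)).ncard}
      (Fintype.card α + Fintype.card γ * coverNum R1) := by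
  have hne : {n | ∃ B' : Set β, (∀ a : α, ∃ b ∈ B', (a, b) ∈ R1) ∧ n = B'.ncard}.Nonempty :=
    ⟨(Set.univ : Set β).ncard, Set.univ,
      fun a => (hA a).imp (fun b hb => ⟨mem_univ b, hb⟩), rfl⟩
  have hγ : (Set.univ : Set γ).ncard = Fintype.card γ := by
    rw [Set.ncard_univ, Nat.card_eq_fintype_card]
  constructor
  · -- membership
    obtain ⟨B', hcov, hcard⟩ := Nat.sInf_mem hne
    choose f hf1 hf2 using hcov
    refine ⟨(fun a => (a, f a)) '' Set.univ, B', ?_, ?_, ?_⟩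
    · rintro ⟨a, b⟩ ⟨a', -, h⟩
      rw [Prod.mk.injEq] at h
      obtain ⟨rfl, rfl⟩ := h
      exact hf2 _
    · ext ⟨a, c⟩
      simp only [qmat, mem_setOf_eq, mem_prod, mem_univ, and_true, true_and]
      exact ⟨fun _ => hA a, fun _ => ⟨f a, ⟨a, trivial, rfl⟩, hf1 a⟩⟩
    · rw [Set.ncard_image_of_injective _ (fun a a' h => congrArg Prod.fst h),
        Set.ncard_univ, Nat.card_eq_fintype_card, my_ncard_prod, hγ, ← hcard,
        coverNum, Nat.mul_comm]
  · -- lower bound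
    rintro n ⟨S1, B', hsub, hq, rfl⟩
    obtain ⟨c0⟩ := ‹Nonempty γ›
    have hall : ∀ a : α, ∃ b ∈ B', (a, b) ∈ S1 := by
      intro a
      have : (a, c0) ∈ qmat S1 (B' ×ˢ (Set.univ : Set γ)) := by
        rw [hq]
        obtain ⟨b, hb⟩ := hA a
        exact ⟨b, hb, mem_univ b, mem_univ c0⟩
      obtain ⟨b, hb1, hb2, -⟩ := this
      exact ⟨b, hb2, hb1⟩
    have h1 : Fintype.card α ≤ S1.ncard := by
      have himg : (Prod.fst '' S1) = Set.univ := by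
        ext a
        simp only [mem_image, mem_univ, iff_true]
        obtain ⟨b, -, hb⟩ := hall a
        exact ⟨(a, b), hb, rfl⟩
      calc Fintype.card α = (Prod.fst '' S1).ncard := by
            rw [himg, Set.ncard_univ, Nat.card_eq_fintype_card]
        _ ≤ S1.ncard := Set.ncard_image_le S1.toFinite
    have h2 : coverNum R1 ≤ B'.ncard :=
      Nat.sInf_le ⟨B', fun a => (hall a).imp (fun b hb => ⟨hb.1, hsub hb.2⟩), rfl⟩
    rw [my_ncard_prod, hγ]
    calc Fintype.card α + Fintype.card γ * coverNum R1
        ≤ S1.ncard + Fintype.card γ * B'.ncard := by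
          exact Nat.add_le_add h1 (Nat.mul_le_mul_left _ h2)
      _ = S1.ncard + B'.ncard * Fintype.card γ := by ring
end

section
/- For Q_matrix(A,C) :- R_1(A,B), R_2(B,C) with R_2 = (π_B R_2) × (π_C R_2) a Cartesian product, there always exists a smallest witness to Q_matrix(D) that is integral, i.e., whose R_2-part is itself a Cartesian product of a subset of B-values with all of π_C R_2. -/
open Set

/-- For `Q_matrix(A,C) :- R₁(A,B), R₂(B,C)` with
`R₂ = B₀ × C₀` a Cartesian product, there always exists a smallest witness to
`Q_matrix(D)` that is integral, i.e. whose `R₂`-part is itself a Cartesian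
product of a subset of `B`-values with all of `C₀ = π_C R₂`. -/
theorem exists_integral_smallest_witness {α β γ : Type}
    (R1 : Set (α × β)) (B0 : Set β) (C0 : Set γ)
    (h1 : R1.Finite) (hB : B0.Finite) (hC : C0.Finite) :
    ∃ (S1 : Set (α × β)) (S2 : Set (β × γ)),
      S1 ⊆ R1 ∧ S2 ⊆ B0 ×ˢ C0 ∧
      qmat S1 S2 = qmat R1 (B0 ×ˢ C0) ∧
      (∀ (T1 : Set (α × β)) (T2 : Set (β × γ)), T1 ⊆ R1 → T2 ⊆ B0 ×ˢ C0 →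
        qmat T1 T2 = qmat R1 (B0 ×ˢ C0) →
        S1.ncard + S2.ncard ≤ T1.ncard + T2.ncard) ∧
      ∃ B' : Set β, B' ⊆ B0 ∧ S2 = B' ×ˢ C0 := by
  classical
  by_cases hQ : qmat R1 (B0 ×ˢ C0) = ∅
  · refine ⟨∅, ∅, empty_subset _, empty_subset _, ?_, ?_, ∅, empty_subset _, by simp⟩
    · rw [hQ]; ext p; simp [qmat]
    · intro T1 T2 _ _ _; simp
  · set A' : Set α := {a | ∃ b ∈ B0, (a, b) ∈ R1} with hA'def
    have hQeq : qmat R1 (B0 ×ˢ C0) = A' ×ˢ C0 := by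
      ext ⟨a, c⟩
      simp only [qmat, mem_setOf_eq, mem_prod, hA'def]
      constructor
      · rintro ⟨b, h1', h2', h3'⟩; exact ⟨⟨b, h2', h1'⟩, h3'⟩
      · rintro ⟨⟨b, h2', h1'⟩, h3'⟩; exact ⟨b, h1', h2', h3'⟩
    have hA'fin : A'.Finite := by
      have hsub : A' ⊆ Prod.fst '' R1 := by
        rintro a ⟨b, _, h⟩; exact ⟨(a, b), h, rfl⟩
      exact (h1.image _).subset hsub
    obtain ⟨⟨a0, c0⟩, hq0⟩ := nonempty_iff_ne_empty.2 hQ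
    rw [hQeq] at hq0
    obtain ⟨ha0, hc0⟩ := hq0
    have hβne : Nonempty β := ⟨ha0.choose⟩
    -- minimum cover
    set Cov : Set β → Prop := fun B' => B' ⊆ B0 ∧ ∀ a ∈ A', ∃ b ∈ B', (a, b) ∈ R1
      with hCovdef
    have hcovB0 : Cov B0 := ⟨subset_rfl, fun a ha => ha⟩
    have hex : ∃ n, ∃ B', Cov B' ∧ B'.ncard = n := ⟨B0.ncard, B0, hcovB0, rfl⟩
    obtain ⟨B', hB'cov, hB'card⟩ := Nat.find_spec hex
    have hmin : ∀ B'', Cov B'' → B'.ncard ≤ B''.ncard := by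
      intro B'' h2
      rw [hB'card]
      exact Nat.find_min' hex ⟨B'', h2, rfl⟩
    have hB'fin : B'.Finite := hB.subset hB'cov.1
    -- selection function for S1
    have hsel : ∀ a, ∃ b, a ∈ A' → (b ∈ B' ∧ (a, b) ∈ R1) := by
      intro a
      by_cases h : a ∈ A'
      · obtain ⟨b, hb1, hb2⟩ := hB'cov.2 a h
        exact ⟨b, fun _ => ⟨hb1, hb2⟩⟩
      · exact ⟨Classical.arbitrary β, fun h' => absurd h' h⟩
    choose φ hφ using hsel
    refine ⟨(fun a => (a, φ a)) '' A', B' ×ˢ C0, ?_, prod_mono_left hB'cov.1, ?_, ?_,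
      B', hB'cov.1, rfl⟩
    · rintro p ⟨a, ha, rfl⟩; exact (hφ a ha).2
    · rw [hQeq]
      ext ⟨a, c⟩
      simp only [qmat, mem_setOf_eq, mem_prod, mem_image]
      constructor
      · rintro ⟨b, ⟨a', ha', heq⟩, hb, hc⟩
        have haa : a' = a := congrArg Prod.fst heq
        subst haa
        exact ⟨ha', hc⟩
      · rintro ⟨ha, hc⟩
        exact ⟨φ a, ⟨a, ha, rfl⟩, (hφ a ha).1, hc⟩
    · intro T1 T2 hT1 hT2 hq
      rw [hQeq] at hq
      have hT1fin : T1.Finite := h1.subset hT1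
      have hT2fin : T2.Finite := (hB.prod hC).subset hT2
      have hinj : ∀ ψ : α → β, Function.Injective (fun a => (a, ψ a)) := by
        intro ψ x y h
        exact congrArg Prod.fst h
      -- |A'| ≤ |T1|
      have hsel2 : ∀ a, ∃ b, a ∈ A' → (a, b) ∈ T1 := by
        intro a
        by_cases h : a ∈ A'
        · have hmem : (a, c0) ∈ qmat T1 T2 := by
            rw [hq]; exact ⟨h, hc0⟩
          obtain ⟨b, hb, _⟩ := hmem
          exact ⟨b, fun _ => hb⟩
        · exact ⟨Classical.arbitrary β, fun h' => absurd h' h⟩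
      choose ψ hψ using hsel2
      have h1le : A'.ncard ≤ T1.ncard := by
        calc A'.ncard = ((fun a => (a, ψ a)) '' A').ncard :=
              (ncard_image_of_injective _ (hinj ψ)).symm
          _ ≤ T1.ncard := ncard_le_ncard (by rintro p ⟨a, ha, rfl⟩; exact hψ a ha) hT1fin
      -- |B'| * |C0| ≤ |T2|
      have hcover : ∀ c ∈ C0, ∀ bf : Finset β, (∀ b, b ∈ bf ↔ (b, c) ∈ T2) →
          B'.ncard ≤ bf.card := by
        intro c hc bf hbf
        have : Cov (↑bf : Set β) := by
          constructor
          · intro b hb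
            exact (hT2 ((hbf b).1 hb)).1
          · intro a ha
            have hmem : (a, c) ∈ qmat T1 T2 := by rw [hq]; exact ⟨ha, hc⟩
            obtain ⟨b, hb1, hb2⟩ := hmem
            exact ⟨b, (hbf b).2 hb2, hT1 hb1⟩
        simpa using hmin _ this
      have h2le : B'.ncard * C0.ncard ≤ T2.ncard := by
        rw [ncard_eq_toFinset_card T2 hT2fin]
        have hmap : ∀ p ∈ hT2fin.toFinset, p.2 ∈ hC.toFinset := by
          intro p hp
          exact hC.mem_toFinset.2 (hT2 (hT2fin.mem_toFinset.1 hp)).2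
        rw [Finset.card_eq_sum_card_fiberwise hmap]
        have hfib : ∀ c ∈ hC.toFinset,
            B'.ncard ≤ (hT2fin.toFinset.filter fun p => p.2 = c).card := by
          intro c hcmem
          have hc : c ∈ C0 := hC.mem_toFinset.1 hcmem
          have hcard := hcover c hc
            ((hT2fin.toFinset.filter fun p => p.2 = c).image Prod.fst) ?_
          · exact hcard.trans (Finset.card_image_le)
          · intro b
            simp only [Finset.mem_image, Finset.mem_filter, hT2fin.mem_toFinset]
            constructor
            · rintro ⟨⟨b', c'⟩, ⟨hmem, rfl⟩, rfl⟩
              exact hmem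
            · intro h
              exact ⟨(b, c), ⟨h, rfl⟩, rfl⟩
        calc B'.ncard * C0.ncard = hC.toFinset.card • B'.ncard := by
              rw [ncard_eq_toFinset_card C0 hC, smul_eq_mul, Nat.mul_comm]
          _ ≤ _ := Finset.card_nsmul_le_sum _ _ _ hfib
      have hS1card : ((fun a => (a, φ a)) '' A').ncard = A'.ncard :=
        ncard_image_of_injective _ (hinj φ)
      have hS2card : (B' ×ˢ C0).ncard = B'.ncard * C0.ncard := by
        rw [ncard_eq_toFinset_card _ (hB'fin.prod hC), ← Finite.toFinset_prod hB'fin hC,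
          Finset.card_product, ← ncard_eq_toFinset_card B' hB'fin,
          ← ncard_eq_toFinset_card C0 hC]
      rw [hS1card, hS2card]
      exact Nat.add_le_add h1le h2le
end

section
/- Reduction correctness for set cover to SWP for Q_cover(A) :- R_1(A,B), R_2(B): given a set cover instance (U, S), construct R_1 = {(a_u, b_S) : u ∈ S} and R_2 = {b_S : S ∈ S}. Then (U,S) has a cover of size at most k if and only if there exists a sub-database D' ⊆ D with Q_cover(D') = Q_cover(D) and |D'| ≤ |U| + k. -/
open Set

/-- `Q_cover` semantics: `Q_cover(R₁, R₂) = {a : ∃ b, (a,b) ∈ R₁ ∧ b ∈ R₂}`. -/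
def qcover {α β : Type} (R1 : Set (α × β)) (R2 : Set β) : Set α :=
  {a | ∃ b, (a, b) ∈ R1 ∧ b ∈ R2}

/-- Reduction correctness for set cover to SWP for
`Q_cover(A) :- R₁(A,B), R₂(B)`: given a set cover instance `(U, S)`, construct
`R₁ = {(a_u, b_S) : u ∈ S}` and `R₂ = {b_S : S ∈ S}`. Then `(U,S)` has a cover
of size at most `k` iff there is a sub-database `D' ⊆ D` with
`Q_cover(D') = Q_cover(D)` and `|D'| ≤ |U| + k`. -/
theorem setCover_to_SWP_qcover {α : Type} [DecidableEq α]
    (U : Finset α) (S : Finset (Finset α))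
    (hS : ∀ s ∈ S, s ⊆ U) (hcov : ∀ u ∈ U, ∃ s ∈ S, u ∈ s) (k : ℕ) :
    (∃ C ⊆ S, (∀ u ∈ U, ∃ s ∈ C, u ∈ s) ∧ C.card ≤ k) ↔
    (∃ (R1' : Set (α × Finset α)) (R2' : Set (Finset α)),
      R1' ⊆ {p | p.2 ∈ S ∧ p.1 ∈ p.2} ∧ R2' ⊆ ↑S ∧
      qcover R1' R2' = qcover {p | p.2 ∈ S ∧ p.1 ∈ p.2} ↑S ∧
      R1'.ncard + R2'.ncard ≤ U.card + k) := by
  classical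
  have hfullU : qcover {p : α × Finset α | p.2 ∈ S ∧ p.1 ∈ p.2} ↑S = ↑U := by
    ext a
    simp only [qcover, Set.mem_setOf_eq, Finset.mem_coe]
    constructor
    · rintro ⟨b, ⟨hbS, hab⟩, _⟩
      exact hS b hbS hab
    · intro ha
      obtain ⟨s, hsS, has⟩ := hcov a ha
      exact ⟨s, ⟨hsS, has⟩, hsS⟩
  constructor
  · rintro ⟨C, hCS, hCcov, hCk⟩
    choose f hf1 hf2 using hCcov
    set g : α → Finset α := fun u => if h : u ∈ U then f u h else ∅ with hg
    refine ⟨(fun u => (u, g u)) '' ↑U, ↑C, ?_, ?_, ?_, ?_⟩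
    · rintro p ⟨u, hu, rfl⟩
      simp only [Set.mem_setOf_eq, hg]
      rw [dif_pos (Finset.mem_coe.mp hu)]
      exact ⟨hCS (hf1 u _), hf2 u _⟩
    · exact fun s hs => hCS hs
    · rw [hfullU]
      ext a
      simp only [qcover, Set.mem_setOf_eq, Finset.mem_coe]
      constructor
      · rintro ⟨b, ⟨u, hu, heq⟩, hbC⟩
        obtain ⟨rfl, rfl⟩ := Prod.mk.injEq .. ▸ (Prod.ext_iff.mp heq.symm)
        exact hu
      · intro ha
        refine ⟨g a, ⟨a, ha, rfl⟩, ?_⟩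
        simp only [hg]; rw [dif_pos ha]; exact hf1 a ha
    · have h1 : ((fun u => (u, g u)) '' ↑U).ncard ≤ U.card := by
        calc ((fun u => (u, g u)) '' ↑U).ncard ≤ (↑U : Set α).ncard :=
              Set.ncard_image_le U.finite_toSet
          _ = U.card := Set.ncard_coe_finset U
      have h2 : (↑C : Set (Finset α)).ncard = C.card := Set.ncard_coe_finset C
      omega
  · rintro ⟨R1', R2', hR1, hR2, hq, hcard⟩
    have hbig : {p : α × Finset α | p.2 ∈ S ∧ p.1 ∈ p.2} ⊆ ↑U ×ˢ ↑S := by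
      rintro ⟨a, b⟩ ⟨hbS, hab⟩
      exact ⟨hS b hbS hab, hbS⟩
    have hR1fin : R1'.Finite :=
      ((U.finite_toSet.prod S.finite_toSet).subset hbig).subset hR1
    have hR2fin : R2'.Finite := S.finite_toSet.subset hR2
    have hQ : (↑U : Set α) ⊆ qcover R1' R2' := by rw [hq, hfullU]
    choose b hb1 hb2 using fun u (hu : u ∈ U) => hQ hu
    set g : α → Finset α := fun u => if h : u ∈ U then b u h else ∅ with hg
    have hg1 : ∀ u ∈ U, (u, g u) ∈ R1' := by
      intro u hu; simp only [hg]; rw [dif_pos hu]; exact hb1 u hu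
    have hg2 : ∀ u ∈ U, g u ∈ R2' := by
      intro u hu; simp only [hg]; rw [dif_pos hu]; exact hb2 u hu
    have hUle : U.card ≤ R1'.ncard := by
      have himg : (fun u => (u, g u)) '' ↑U ⊆ R1' := by
        rintro p ⟨u, hu, rfl⟩; exact hg1 u hu
      have hinj : Function.Injective (fun u : α => (u, g u)) := by
        intro x y hxy; exact (Prod.ext_iff.mp hxy).1
      calc U.card = (↑U : Set α).ncard := (Set.ncard_coe_finset U).symm
        _ = ((fun u => (u, g u)) '' ↑U).ncard :=
            (Set.ncard_image_of_injective _ hinj).symm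
        _ ≤ R1'.ncard := Set.ncard_le_ncard himg hR1fin
    refine ⟨hR2fin.toFinset, ?_, ?_, ?_⟩
    · intro s hs
      exact hR2 (hR2fin.mem_toFinset.mp hs)
    · intro u hu
      refine ⟨g u, hR2fin.mem_toFinset.mpr (hg2 u hu), ?_⟩
      exact (hR1 (hg1 u hu)).2
    · have : hR2fin.toFinset.card = R2'.ncard := by
        rw [Set.ncard_eq_toFinset_card R2' hR2fin]
      omega
end

section
/- Lower bound for dominant relations: for a conjunctive query Q with a connected component E_i of the existential-connectivity graph having dominant relation Ṙ_i, any witness D* to Q(D) contains at least |π_{head(Ṙ_i)} Q(D)| tuples from Ṙ_i. -/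
open Set

/-- A conjunctive query: a set of relation atoms (indexed by `ι`), each with a
set of attributes, together with a set of output (head) attributes. -/
structure CQ (ι Attr : Type) where
  attrs : ι → Set Attr
  head : Set Attr

variable {ι κ Attr V : Type}

/-- A database for `Q`: for each relation, a set of tuples over its attributes. -/
def Db (Q : CQ ι Attr) (V : Type) : Type := ∀ i : ι, Set (↥(Q.attrs i) → V)

/-- Restriction (projection) of a full assignment to a set of attributes. -/
def restrict (f : Attr → V) (S : Set Attr) : ↥S → V := fun a => f a.1

/-- Query evaluation: projections onto the head of all joint assignments
consistent with every relation. -/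
def CQ.eval (Q : CQ ι Attr) (D : Db Q V) : Set (↥Q.head → V) :=
  { h | ∃ f : Attr → V, (∀ i, restrict f (Q.attrs i) ∈ D i) ∧ restrict f Q.head = h }

/-- Sub-database (componentwise inclusion). -/
def Db.le {Q : CQ ι Attr} (D' D : Db Q V) : Prop := ∀ i, D' i ⊆ D i

/-- A witness: a sub-database preserving the query result. -/
def IsWitness (Q : CQ ι Attr) (D D' : Db Q V) : Prop :=
  Db.le D' D ∧ Q.eval D' = Q.eval D

/-- Total number of tuples of a database. -/
noncomputable def dbSize [Fintype ι] {Q : CQ ι Attr} (D : Db Q V) : ℕ :=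
  ∑ i, (D i).ncard

/-- A smallest witness. -/
def IsSmallestWitness [Fintype ι] (Q : CQ ι Attr) (D D' : Db Q V) : Prop :=
  IsWitness Q D D' ∧ ∀ D'' : Db Q V, IsWitness Q D D'' → dbSize D' ≤ dbSize D''

/-- Adjacency in the existential-connectivity graph `G^∃_Q`: two relations are
adjacent if they share a non-output attribute. -/
def exAdj (Q : CQ ι Attr) (i j : ι) : Prop :=
  ((Q.attrs i ∩ Q.attrs j) \ Q.head).Nonempty

/-- Vertices of `G^∃_Q`: relations containing a non-output attribute. -/
def IsExVertex (Q : CQ ι Attr) (i : ι) : Prop := (Q.attrs i \ Q.head).Nonempty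

/-- `E` is a connected component of the existential-connectivity graph `G^∃_Q`. -/
def IsCompOf (Q : CQ ι Attr) (E : Set ι) : Prop :=
  E.Nonempty ∧ (∀ i ∈ E, IsExVertex Q i) ∧
  (∀ i ∈ E, ∀ j : ι, IsExVertex Q j → exAdj Q i j → j ∈ E) ∧
  (∀ i ∈ E, ∀ j ∈ E, Relation.ReflTransGen (fun a b => exAdj Q a b ∧ b ∈ E) i j)

/-- `r` is a dominant relation for the set `E` of relations: every output
attribute appearing in a relation of `E` also appears in `r`. -/
def IsDominant (Q : CQ ι Attr) (E : Set ι) (r : ι) : Prop :=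
  ∀ j ∈ E, Q.attrs j ∩ Q.head ⊆ Q.attrs r

/-- Lower bound for dominant relations: for a conjunctive query `Q`
with a connected component `E` of the existential-connectivity graph having
dominant relation `r`, any witness `D*` to `Q(D)` contains at least
`|π_{head(R_r)} Q(D)|` tuples from `R_r`. -/
theorem dominant_relation_lower_bound (Q : CQ ι Attr) (D Dstar : Db Q V)
    (hfin : ∀ i, (D i).Finite) (hw : IsWitness Q D Dstar)
    (E : Set ι) (hE : IsCompOf Q E) (r : ι) (hrE : r ∈ E)
    (hdom : IsDominant Q E r) :
    ((fun h : ↥Q.head → V => fun a : ↥(Q.attrs r ∩ Q.head) => h ⟨a.1, a.2.2⟩) ''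
        Q.eval D).ncard ≤ (Dstar r).ncard := by
  have hDsfin : (Dstar r).Finite := (hfin r).subset (hw.1 r)
  set g : (↥(Q.attrs r) → V) → (↥(Q.attrs r ∩ Q.head) → V) :=
    fun t a => t ⟨a.1, a.2.1⟩ with hg
  have hsub : ((fun h : ↥Q.head → V => fun a : ↥(Q.attrs r ∩ Q.head) => h ⟨a.1, a.2.2⟩) ''
      Q.eval D) ⊆ g '' (Dstar r) := by
    rintro p ⟨h, hh, rfl⟩
    rw [← hw.2] at hh
    obtain ⟨f, hf, rfl⟩ := hh
    exact ⟨restrict f (Q.attrs r), hf r, rfl⟩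
  calc ((fun h : ↥Q.head → V => fun a : ↥(Q.attrs r ∩ Q.head) => h ⟨a.1, a.2.2⟩) ''
      Q.eval D).ncard ≤ (g '' (Dstar r)).ncard :=
        Set.ncard_le_ncard hsub (hDsfin.image g)
    _ ≤ (Dstar r).ncard := Set.ncard_image_le hDsfin
end

section
/- Every free-connex conjunctive query has the head-domination property: for each connected component E of the existential-connectivity graph G^∃_Q, there exists a relation R ∈ rels(Q) such that every output attribute appearing in any relation of E also appears in R. -/
open Set

variable {ι κ Attr V : Type}

/-- `Q` is acyclic: it admits a join tree, i.e. a tree on its relations such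
that, for every attribute, the set of relations containing it induces a
connected subtree. -/
def IsAcyclicCQ (Q : CQ ι Attr) : Prop :=
  ∃ T : SimpleGraph ι, T.IsTree ∧
    ∀ a : Attr, {i : ι | a ∈ Q.attrs i}.Nonempty →
      (T.induce {i : ι | a ∈ Q.attrs i}).Connected

/-- The query obtained from `Q` by adding one more relation atom whose
attribute set is exactly `head(Q)`. -/
def CQ.extendByHead (Q : CQ ι Attr) : CQ (Option ι) Attr where
  attrs := fun o => o.elim Q.head Q.attrs
  head := Q.head

/-- `Q` is free-connex: acyclic, and still acyclic after adding an atom over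
exactly `head(Q)`. -/
def IsFreeConnex (Q : CQ ι Attr) : Prop :=
  IsAcyclicCQ Q ∧ IsAcyclicCQ Q.extendByHead

open SimpleGraph

def RelAvoid (T : SimpleGraph (Option ι)) (x y : Option ι) : Prop :=
  ∃ w : T.Walk x y, none ∉ w.support

lemma RelAvoid.refl {T : SimpleGraph (Option ι)} {i : ι} : RelAvoid T (some i) (some i) :=
  ⟨Walk.nil, by simp⟩

lemma RelAvoid.symm {T : SimpleGraph (Option ι)} {x y : Option ι}
    (h : RelAvoid T x y) : RelAvoid T y x := by
  obtain ⟨w, hw⟩ := h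
  exact ⟨w.reverse, by simpa [Walk.support_reverse] using hw⟩

lemma RelAvoid.trans {T : SimpleGraph (Option ι)} {x y z : Option ι}
    (h : RelAvoid T x y) (h' : RelAvoid T y z) : RelAvoid T x z := by
  obtain ⟨w, hw⟩ := h
  obtain ⟨w', hw'⟩ := h'
  refine ⟨w.append w', ?_⟩
  rw [Walk.support_append]
  intro hmem
  rcases List.mem_append.mp hmem with h1 | h2
  · exact hw h1
  · exact hw' (List.mem_of_mem_tail h2)

lemma exists_pre {T : SimpleGraph (Option ι)} :
    ∀ {x y : Option ι} (w : T.Walk x y), x ≠ none → y = none →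
      ∃ p, T.Adj p none ∧ p ∈ w.support ∧ ∃ w' : T.Walk x p, none ∉ w'.support := by
  intro x y w
  induction w with
  | nil => intro hx hy; exact absurd hy hx
  | @cons u v z h rest ih =>
    intro hx hy
    subst hy
    by_cases hv : v = none
    · subst hv
      exact ⟨u, h, by simp, Walk.nil, by simp [Ne.symm hx]⟩
    · obtain ⟨p, hp, hps, w', hw'⟩ := ih hv rfl
      refine ⟨p, hp, by simp [hps], Walk.cons h w', ?_⟩
      simp only [Walk.support_cons, List.mem_cons]
      rintro (h1 | h2)
      · exact hx h1.symm
      · exact hw' h2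

lemma nbr_unique {T : SimpleGraph (Option ι)} (hT : T.IsTree) {p q : Option ι}
    (hp : T.Adj p none) (hq : T.Adj q none) (h : RelAvoid T p q) : p = q := by
  classical
  by_contra hne
  obtain ⟨w, hw⟩ := h
  have hpath : none ∉ (w.toPath : T.Walk p q).support :=
    fun hc => hw (Walk.support_toPath_subset w hc)
  let w1 : T.Walk none q := Walk.cons hq.symm Walk.nil
  let w2 : T.Walk none q := Walk.cons hp.symm (w.toPath : T.Walk p q)
  have h1 : w1.IsPath := by
    apply Walk.IsPath.nil.cons
    simpa using Ne.symm hq.ne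
  have h2 : w2.IsPath := (w.toPath).isPath.cons hpath
  have heq : w1 = w2 := (hT.existsUnique_path none q).unique h1 h2
  have : w1.length = w2.length := by rw [heq]
  simp only [w1, w2, Walk.length_cons, Walk.length_nil, add_left_inj] at this
  exact hne (Walk.eq_of_length_eq_zero this.symm)

/-- From connectivity of the induced subgraph on an attribute, get a walk in
`T` whose support stays inside the attribute's set. -/
lemma walk_in_set {T : SimpleGraph (Option ι)} {S : Set (Option ι)}
    (hc : (T.induce S).Connected) {x y : Option ι} (hx : x ∈ S) (hy : y ∈ S) :
    ∃ w : T.Walk x y, ∀ v ∈ w.support, v ∈ S := by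
  obtain ⟨w0⟩ := hc.preconnected ⟨x, hx⟩ ⟨y, hy⟩
  refine ⟨w0.map (SimpleGraph.Embedding.induce S).toHom, ?_⟩
  intro v hv
  erw [Walk.support_map, List.mem_map] at hv
  obtain ⟨u, _, rfl⟩ := hv
  exact u.2

/-- Every free-connex conjunctive query has the head-domination
property: for each connected component `E` of the existential-connectivity
graph `G^∃_Q`, there exists a relation `r ∈ rels(Q)` such that every output
attribute appearing in any relation of `E` also appears in `r`. -/
theorem freeConnex_head_domination (Q : CQ ι Attr) (hfc : IsFreeConnex Q)
    (E : Set ι) (hE : IsCompOf Q E) :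
    ∃ r : ι, IsDominant Q E r := by
  classical
  obtain ⟨T, hT, hconn⟩ := hfc.2
  -- step 1: adjacency gives RelAvoid
  have step1 : ∀ i j : ι, exAdj Q i j → RelAvoid T (some i) (some j) := by
    intro i j ⟨a, ⟨⟨hai, haj⟩, hah⟩⟩
    have hx : some i ∈ {o : Option ι | a ∈ Q.extendByHead.attrs o} := hai
    have hy : some j ∈ {o : Option ι | a ∈ Q.extendByHead.attrs o} := haj
    obtain ⟨w, hw⟩ := walk_in_set (hconn a ⟨_, hx⟩) hx hy
    refine ⟨w, fun hmem => ?_⟩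
    exact hah (hw none hmem)
  -- step 2: connectivity within E gives RelAvoid
  have step2 : ∀ i ∈ E, ∀ j ∈ E, RelAvoid T (some i) (some j) := by
    have key : ∀ {x y : ι},
        Relation.ReflTransGen (fun a b => exAdj Q a b ∧ b ∈ E) x y →
        RelAvoid T (some x) (some y) := by
      intro x y h
      induction h with
      | refl => exact RelAvoid.refl
      | tail _ hstep ih => exact ih.trans (step1 _ _ hstep.1)
    exact fun i hi j hj => key (hE.2.2.2 i hi j hj)
  -- step 3: output attribute in E gives a neighbor of none carrying it
  have step3 : ∀ j : ι, ∀ a ∈ Q.attrs j ∩ Q.head,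
      ∃ p : ι, T.Adj (some p) none ∧ a ∈ Q.attrs p ∧ RelAvoid T (some j) (some p) := by
    intro j a ⟨haj, hah⟩
    have hx : some j ∈ {o : Option ι | a ∈ Q.extendByHead.attrs o} := haj
    have hy : (none : Option ι) ∈ {o : Option ι | a ∈ Q.extendByHead.attrs o} := hah
    obtain ⟨w, hw⟩ := walk_in_set (hconn a ⟨_, hx⟩) hx hy
    obtain ⟨p, hadj, hps, w', hw'⟩ := exists_pre w (by simp) rfl
    obtain ⟨p', rfl⟩ : ∃ p' : ι, p = some p' := by
      cases p with
      | none => exact absurd rfl hadj.ne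
      | some p' => exact ⟨p', rfl⟩
    exact ⟨p', hadj, hw _ hps, ⟨w', hw'⟩⟩
  obtain ⟨i0, hi0⟩ := hE.1
  by_cases hex : ∃ j ∈ E, (Q.attrs j ∩ Q.head).Nonempty
  · obtain ⟨j0, hj0, a0, ha0⟩ := hex
    obtain ⟨r, hradj, _, hrrel⟩ := step3 j0 a0 ha0
    refine ⟨r, fun j hj a ha => ?_⟩
    obtain ⟨p, hpadj, hap, hprel⟩ := step3 j a ha
    have : some p = some r :=
      nbr_unique hT hpadj hradj
        (hprel.symm.trans ((step2 j hj j0 hj0).trans hrrel))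
    rwa [Option.some_inj.mp this] at hap
  · push_neg at hex
    refine ⟨i0, fun j hj a ha => ?_⟩
    rw [hex j hj] at ha
    exact ha.elim
end

section
/- Equivalence of head-cluster definitions: a conjunctive query Q has the head-cluster property (every relation in each connected component of G^∃_Q is a dominant relation for that component) if and only if for every pair of relations R_i, R_j ∈ rels(Q) with head(R_i) ≠ head(R_j), attr(R_i) ∩ attr(R_j) ⊆ head(Q). -/
open Set

variable {ι κ Attr V : Type}

/-- The head-cluster property: every relation in each connected component of
`G^∃_Q` is a dominant relation for that component. -/
def HasHeadCluster (Q : CQ ι Attr) : Prop :=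
  ∀ E : Set ι, IsCompOf Q E → ∀ r ∈ E, IsDominant Q E r

/-- Equivalence of head-cluster definitions: a conjunctive query
`Q` has the head-cluster property iff for every pair of relations `R_i, R_j`
with `head(R_i) ≠ head(R_j)`, `attr(R_i) ∩ attr(R_j) ⊆ head(Q)`. -/
theorem headCluster_iff_pairwise (Q : CQ ι Attr) :
    HasHeadCluster Q ↔
      ∀ i j : ι, Q.attrs i ∩ Q.head ≠ Q.attrs j ∩ Q.head →
        Q.attrs i ∩ Q.attrs j ⊆ Q.head := by
  constructor
  · intro hHC i j hne x hx
    by_contra hxh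
    -- i, j are ex-vertices and adjacent
    have hadj : exAdj Q i j := ⟨x, ⟨hx.1, hx.2⟩, hxh⟩
    have hvi : IsExVertex Q i := ⟨x, hx.1, hxh⟩
    have hvj : IsExVertex Q j := ⟨x, hx.2, hxh⟩
    -- component of i
    set E : Set ι := {k | IsExVertex Q k ∧
      Relation.ReflTransGen (fun a b => exAdj Q a b ∧ IsExVertex Q b) i k} with hE
    have hiE : i ∈ E := ⟨hvi, Relation.ReflTransGen.refl⟩
    have hjE : j ∈ E := ⟨hvj, Relation.ReflTransGen.single ⟨hadj, hvj⟩⟩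
    have hsym : ∀ a b, exAdj Q a b → exAdj Q b a := by
      intro a b ⟨y, hy1, hy2⟩
      exact ⟨y, ⟨hy1.2, hy1.1⟩, hy2⟩
    have hpathE : ∀ k, Relation.ReflTransGen (fun a b => exAdj Q a b ∧ IsExVertex Q b) i k →
        Relation.ReflTransGen (fun a b => exAdj Q a b ∧ b ∈ E) i k := by
      intro k hpath
      induction hpath with
      | refl => exact Relation.ReflTransGen.refl
      | @tail b c hab hstep ih =>
        exact ih.tail ⟨hstep.1, hstep.2, hab.tail hstep⟩
    have hcomp : IsCompOf Q E := by
      refine ⟨⟨i, hiE⟩, fun k hk => hk.1, ?_, ?_⟩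
      · rintro k ⟨hvk, hpk⟩ l hvl hkl
        exact ⟨hvl, hpk.tail ⟨hkl, hvl⟩⟩
      · intro k hk l hl
        have hrev : ∀ k, Relation.ReflTransGen (fun a b => exAdj Q a b ∧ IsExVertex Q b) i k →
            k ∈ E ∧ Relation.ReflTransGen (fun a b => exAdj Q a b ∧ b ∈ E) k i := by
          intro k hpk
          induction hpk with
          | refl => exact ⟨hiE, Relation.ReflTransGen.refl⟩
          | tail hab hstep ih =>
            rename_i b c
            have hcE : c ∈ E := ⟨hstep.2, hab.tail hstep⟩
            exact ⟨hcE, Relation.ReflTransGen.head ⟨hsym _ _ hstep.1, ih.1⟩ ih.2⟩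
        exact ((hrev k hk.2).2).trans (hpathE l hl.2)
    -- dominance both ways gives equality of heads
    have hd1 := hHC E hcomp i hiE j hjE
    have hd2 := hHC E hcomp j hjE i hiE
    apply hne
    apply Set.Subset.antisymm
    · exact fun y hy => ⟨hd2 hy, hy.2⟩
    · exact fun y hy => ⟨hd1 hy, hy.2⟩
  · intro hpw E hE r hr j hj
    have key : ∀ a b, exAdj Q a b → Q.attrs a ∩ Q.head = Q.attrs b ∩ Q.head := by
      intro a b ⟨y, hy1, hy2⟩
      by_contra h
      exact hy2 (hpw a b h hy1)
    have htrans : ∀ a b : ι, Relation.ReflTransGen (fun a b => exAdj Q a b ∧ b ∈ E) a b →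
        Q.attrs a ∩ Q.head = Q.attrs b ∩ Q.head := by
      intro a b h
      induction h with
      | refl => rfl
      | tail _ hstep ih => exact ih.trans (key _ _ hstep.1)
    rw [← htrans r j (hE.2.2.2 r hr j hj)]
    exact fun y hy => hy.1
end

section
/- Reduction correctness for set cover to approximate SWP of Q_matrix: given a set cover instance (U,S) with |U| = n, construct R_1 = {(a_u, b_S) : u ∈ S} and R_2 = {b_S : S ∈ S} × {c_u : u ∈ U}. Then (U,S) has a cover of size at most k if and only if SWP(Q_matrix, D) has an integral solution of size at most n(k+1). -/
open Set

lemma ncard_prod' {α β : Type*} (s : Set α) (t : Set β) :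
    (s ×ˢ t).ncard = s.ncard * t.ncard := by
  have := Nat.card_congr (Equiv.Set.prod s t)
  simpa [Nat.card_prod, Nat.card_coe_set_eq] using this

/-- Reduction correctness for set cover to approximate SWP of
`Q_matrix`: given a set cover instance `(U,S)` with `|U| = n` (here `U` is the
finite type `α`), construct `R₁ = {(a_u, b_S) : u ∈ S}` and
`R₂ = {b_S : S ∈ S} × {c_u : u ∈ U}` (a full Cartesian product). Then `(U,S)`
has a cover of size at most `k` iff `SWP(Q_matrix, D)` has an integral
solution of size at most `n(k+1)`. -/
theorem setCover_to_SWP_qmatrix {α : Type} [Fintype α] [DecidableEq α]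
    (S : Finset (Finset α)) (hcov : ∀ u : α, ∃ s ∈ S, u ∈ s) (k : ℕ) :
    (∃ C ⊆ S, (∀ u : α, ∃ s ∈ C, u ∈ s) ∧ C.card ≤ k) ↔
    (∃ (S1 : Set (α × Finset α)) (B' : Set (Finset α)),
      S1 ⊆ {p | p.2 ∈ S ∧ p.1 ∈ p.2} ∧ B' ⊆ ↑S ∧
      qmat S1 (B' ×ˢ (Set.univ : Set α)) =
        qmat {p : α × Finset α | p.2 ∈ S ∧ p.1 ∈ p.2}
          ((↑S : Set (Finset α)) ×ˢ (Set.univ : Set α)) ∧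
      S1.ncard + (B' ×ˢ (Set.univ : Set α)).ncard ≤ Fintype.card α * (k + 1)) := by
  constructor
  · rintro ⟨C, hCS, hCcov, hCk⟩
    choose f hfC hfmem using hCcov
    refine ⟨Set.range (fun u => (u, f u)), Set.range f, ?_, ?_, ?_, ?_⟩
    · rintro p ⟨u, rfl⟩; exact ⟨hCS (hfC u), hfmem u⟩
    · rintro s ⟨u, rfl⟩; exact hCS (hfC u)
    · ext p
      simp only [qmat, Set.mem_setOf_eq, Set.mem_prod, Set.mem_univ, and_true]
      constructor
      · rintro ⟨b, ⟨u, hu⟩, -⟩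
        exact ⟨f p.1, ⟨hCS (hfC p.1), hfmem p.1⟩, hCS (hfC p.1)⟩
      · rintro -
        exact ⟨f p.1, ⟨p.1, rfl⟩, ⟨p.1, rfl⟩⟩
    · have h1 : (Set.range (fun u : α => (u, f u))).ncard = Fintype.card α := by
        rw [← Set.image_univ, Set.ncard_image_of_injective _ (fun a b h => (Prod.mk.injEq ..).mp h |>.1),
          Set.ncard_univ, Nat.card_eq_fintype_card]
      have h2 : (Set.range f).ncard ≤ k := by
        calc (Set.range f).ncard ≤ (↑C : Set (Finset α)).ncard :=
              Set.ncard_le_ncard (by rintro s ⟨u, rfl⟩; exact hfC u) (Set.toFinite _)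
          _ = C.card := by rw [Set.ncard_coe_finset]
          _ ≤ k := hCk
      rw [h1, ncard_prod', Set.ncard_univ, Nat.card_eq_fintype_card]
      calc Fintype.card α + (Set.range f).ncard * Fintype.card α
          ≤ Fintype.card α + k * Fintype.card α :=
            Nat.add_le_add_left (Nat.mul_le_mul_right _ h2) _
        _ = Fintype.card α * (k + 1) := by ring
  · rintro ⟨S1, B', hS1, hB', heq, hcard⟩
    rcases isEmpty_or_nonempty α with hα | hα
    · exact ⟨∅, Finset.empty_subset _, fun u => (hα.false u).elim, by simp⟩
    · obtain ⟨c₀⟩ := hα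
      have hqfull : ∀ u : α, ∃ b ∈ B', (u, b) ∈ S1 := by
        intro u
        have : (u, c₀) ∈ qmat S1 (B' ×ˢ (Set.univ : Set α)) := by
          rw [heq]
          obtain ⟨s, hs, hus⟩ := hcov u
          exact ⟨s, ⟨hs, hus⟩, ⟨hs, trivial⟩⟩
        obtain ⟨b, hb1, hb2, -⟩ := this
        exact ⟨b, hb2, hb1⟩
      choose g hg1 hg2 using hqfull
      have hfin : B'.Finite := Set.toFinite _
      refine ⟨hfin.toFinset, ?_, ?_, ?_⟩
      · intro s hs; simp only [Set.Finite.mem_toFinset] at hs; exact hB' hs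
      · intro u
        refine ⟨g u, by simp [hg1 u], (hS1 (hg2 u)).2⟩
      · -- card bound
        have hn : 0 < Fintype.card α := Fintype.card_pos_iff.mpr ⟨c₀⟩
        have hS1n : Fintype.card α ≤ S1.ncard := by
          have : (Set.range (fun u : α => (u, g u))).ncard = Fintype.card α := by
            rw [← Set.image_univ, Set.ncard_image_of_injective _ (fun a b h => (Prod.mk.injEq ..).mp h |>.1),
              Set.ncard_univ, Nat.card_eq_fintype_card]
          rw [← this]
          exact Set.ncard_le_ncard (by rintro p ⟨u, rfl⟩; exact hg2 u) (Set.toFinite _)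
        have hBcard : hfin.toFinset.card = B'.ncard :=
          (Set.ncard_eq_toFinset_card B' hfin).symm
        rw [hBcard]
        have hineq : Fintype.card α + B'.ncard * Fintype.card α ≤ Fintype.card α * (k + 1) := by
          calc Fintype.card α + B'.ncard * Fintype.card α
              ≤ S1.ncard + (B' ×ˢ (Set.univ : Set α)).ncard := by
                rw [ncard_prod', Set.ncard_univ, Nat.card_eq_fintype_card]
                exact Nat.add_le_add_right hS1n _
            _ ≤ Fintype.card α * (k + 1) := hcard
        nlinarith
end

section
/- In any connected conjunctive query Q (no free sequence, no nested clique in the renamed query) and any dominant relation Ṙ of a connected component E of G^∃_Q, head(Ṙ) ≠ ∅. -/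
open Set

variable {ι κ Attr V : Type}

/-- Adjacency in the connectivity graph `G_Q`: two relations are adjacent if
they share any attribute. -/
def connAdj (Q : CQ ι Attr) (i j : ι) : Prop := (Q.attrs i ∩ Q.attrs j).Nonempty

/-- In any connected conjunctive query `Q` (with nonempty head,
every head attribute occurring in some relation), for any connected component
`E` of `G^∃_Q` and any dominant relation `r` of `E`, `head(R_r) ≠ ∅`. -/
theorem dominant_has_output_attribute (Q : CQ ι Attr)
    (hconn : ∀ i j : ι, Relation.ReflTransGen (connAdj Q) i j)
    (hhead : Q.head.Nonempty) (hcov : Q.head ⊆ ⋃ i : ι, Q.attrs i)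
    (E : Set ι) (hE : IsCompOf Q E)
    (r : ι) (hdom : IsDominant Q E r) :
    (Q.attrs r ∩ Q.head).Nonempty := by
  by_contra hgoal
  -- every relation in E has no head attribute
  have hEno : ∀ j ∈ E, ∀ x, x ∈ Q.attrs j → x ∉ Q.head := by
    intro j hj x hx hxh
    exact hgoal ⟨x, hdom j hj ⟨hx, hxh⟩, hxh⟩
  obtain ⟨i₀, hi₀⟩ := hE.1
  obtain ⟨x₀, hx₀⟩ := hhead
  obtain ⟨_, ⟨j₀, rfl⟩, hx₀j⟩ := hcov hx₀
  -- any relation reachable from i₀ in G_Q stays in E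
  have key : ∀ j, Relation.ReflTransGen (connAdj Q) i₀ j → j ∈ E := by
    intro j hpath
    induction hpath with
    | refl => exact hi₀
    | tail hab hbc ih =>
      obtain ⟨x, hxa, hxb⟩ := hbc
      have hxh : x ∉ Q.head := hEno _ ih x hxa
      exact hE.2.2.1 _ ih _ ⟨x, hxb, hxh⟩ ⟨x, ⟨hxa, hxb⟩, hxh⟩
  exact hEno j₀ (key j₀ (hconn i₀ j₀)) x₀ hx₀j hx₀
end
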